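/- Let f ∈ ℝ[x₁,…,xₙ, x_{n+1}] be of degree l ≥ 1 in x_{n+1}, with leading coefficient (as a polynomial in x_{n+1}) not identically zero. Let U ⊆ ℝⁿ be a nonempty open set. If f(a, t) ≥ 0 for all a ∈ U and all t ∈ ℝ, then l is even, and for every a ∈ U one has lc(f, x_{n+1})(a) ≥ 0 and (-1)^{l/2}·discrim(f, x_{n+1})(a) ≥ 0. -/

import Mathlib

open Polynomial MvPolynomial

/-- The Sylvester matrix of two polynomials `p` (regarded as having degree `m`) and
`q` (regarded as having degree `n`): the first `n` rows carry the coefficients of `p`,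
the remaining `m` rows carry the coefficients of `q`. -/
noncomputable def sylvesterMatrix {R : Type*} [CommRing R] (m n : ℕ) (p q : R[X]) :
    Matrix (Fin (n + m)) (Fin (n + m)) R :=
  Matrix.of fun i j =>
    if (i : ℕ) < n then
      (if (i : ℕ) ≤ (j : ℕ) ∧ (j : ℕ) ≤ (i : ℕ) + m then p.coeff (m + i - j) else 0)
    else
      (if (i : ℕ) - n ≤ (j : ℕ) ∧ (j : ℕ) ≤ ((i : ℕ) - n) + n then
        q.coeff (n + ((i : ℕ) - n) - j) else 0)

/-- The resultant of `p` (of degree `m`) and `q` (of degree `n`). -/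
noncomputable def resultant {R : Type*} [CommRing R] (m n : ℕ) (p q : R[X]) : R :=
  (sylvesterMatrix m n p q).det

section RowSum
variable {K : Type*} [CommRing K]

lemma row_sum_aux (N D t : ℕ) (ht : t + D < N) (c : ℕ → K) (r : K) :
    ∑ k : Fin N, (if t ≤ (k : ℕ) ∧ (k : ℕ) ≤ t + D then c (D + t - (k : ℕ)) else 0)
        * r ^ (N - 1 - (k : ℕ))
      = r ^ (N - 1 - t - D) * ∑ d ∈ Finset.range (D + 1), c d * r ^ d := by
  rw [Finset.mul_sum]
  rw [Fin.sum_univ_eq_sum_range (fun k =>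
      (if t ≤ k ∧ k ≤ t + D then c (D + t - k) else 0) * r ^ (N - 1 - k)) N]
  simp only [ite_mul, zero_mul]
  rw [← Finset.sum_filter]
  have hf : (Finset.range N).filter (fun k => t ≤ k ∧ k ≤ t + D) = Finset.Icc t (t + D) := by
    ext k
    simp only [Finset.mem_filter, Finset.mem_range, Finset.mem_Icc]
    omega
  rw [hf]
  refine Finset.sum_bij' (fun k _ => t + D - k) (fun d _ => t + D - d) ?_ ?_ ?_ ?_ ?_
  · intro k hk; simp only [Finset.mem_Icc] at hk; simp only [Finset.mem_range]; omega
  · intro d hd; simp only [Finset.mem_range] at hd; simp only [Finset.mem_Icc]; omega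
  · intro k hk; simp only [Finset.mem_Icc] at hk; omega
  · intro d hd; simp only [Finset.mem_range] at hd; omega
  · intro k hk
    simp only [Finset.mem_Icc] at hk
    have h1 : D + t - k = t + D - k := by omega
    have h2 : N - 1 - t - D + (t + D - k) = N - 1 - k := by omega
    rw [h1, ← h2, pow_add]
    ring
end RowSum

section Syl
variable {K : Type*} [CommRing K]

lemma syl_mul_pow (l n : ℕ) (p q : K[X]) (hp : p.natDegree ≤ l) (hq : q.natDegree ≤ n)
    (r : K) (i : Fin (n + l)) :
    ∑ k : Fin (n + l), sylvesterMatrix l n p q i k * r ^ (n + l - 1 - (k : ℕ)) =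
      if (i : ℕ) < n then r ^ (n - 1 - (i : ℕ)) * p.eval r
      else r ^ (l - 1 - ((i : ℕ) - n)) * q.eval r := by
  by_cases hi : (i : ℕ) < n
  · rw [if_pos hi]
    have := row_sum_aux (n + l) l (i : ℕ) (by omega) (fun d => p.coeff d) r
    simp only [sylvesterMatrix, Matrix.of_apply, hi, if_true]
    rw [this]
    have hd : n + l - 1 - (i : ℕ) - l = n - 1 - (i : ℕ) := by omega
    rw [hd, eval_eq_sum_range' (by omega : p.natDegree < l + 1)]
  · rw [if_neg hi]
    push_neg at hi
    have hib : (i : ℕ) - n + n < n + l := by have := i.isLt; omega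
    have := row_sum_aux (n + l) n ((i : ℕ) - n) hib (fun d => q.coeff d) r
    simp only [sylvesterMatrix, Matrix.of_apply, Nat.not_lt.mpr hi, if_false]
    rw [this]
    have hd : n + l - 1 - ((i : ℕ) - n) - n = l - 1 - ((i : ℕ) - n) := by
      have := i.isLt; omega
    rw [hd, eval_eq_sum_range' (by omega : q.natDegree < n + 1)]
end Syl

lemma resultant_map {R S : Type*} [CommRing R] [CommRing S] (φ : R →+* S) (m n : ℕ)
    (p q : R[X]) :
    resultant m n (p.map φ) (q.map φ) = φ (resultant m n p q) := by
  unfold _root_.resultant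
  rw [RingHom.map_det, RingHom.mapMatrix_apply]
  congr 1
  ext i j
  simp only [sylvesterMatrix, Matrix.of_apply, Matrix.map_apply, apply_ite φ, map_zero,
    _root_.Polynomial.coeff_map]

lemma resultant_eq_zero_of_common_root {K : Type*} [Field K] (l n : ℕ) (h0 : 0 < n + l)
    (p q : K[X])
    (hp : p.natDegree ≤ l) (hq : q.natDegree ≤ n) (z : K)
    (hpz : p.eval z = 0) (hqz : q.eval z = 0) :
    resultant l n p q = 0 := by
  have hdet : (sylvesterMatrix l n p q).mulVec (fun k => z ^ (n + l - 1 - (k : ℕ))) = 0 := by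
    funext i
    show ∑ k, sylvesterMatrix l n p q i k * z ^ (n + l - 1 - (k : ℕ)) = 0
    rw [syl_mul_pow l n p q hp hq z i, hpz, hqz]
    split <;> ring
  have hne : (fun k : Fin (n + l) => z ^ (n + l - 1 - (k : ℕ))) ≠ 0 := by
    intro h
    have := congrFun h ⟨n + l - 1, by omega⟩
    simp only [Pi.zero_apply] at this
    rw [Nat.sub_self] at this
    simp at this
  unfold _root_.resultant
  by_contra hd
  exact hne (Matrix.eq_zero_of_mulVec_eq_zero hd hdet)

lemma resultant_eq_prod {K : Type*} [Field K] (l n : ℕ) (c : K) (hc : c ≠ 0)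
    (r : Fin l → K) (hr : Function.Injective r) (p q : K[X])
    (hp : p = Polynomial.C c * ∏ k, (Polynomial.X - Polynomial.C (r k))) (hq : q.natDegree ≤ n) :
    resultant l n p q = c ^ n * ∏ k, q.eval (r k) := by
  have hm : (∏ k, (Polynomial.X - Polynomial.C (r k))).Monic :=
    monic_prod_of_monic _ _ fun k _ => monic_X_sub_C (r k)
  have hprodnd : (∏ k : Fin l, (Polynomial.X - Polynomial.C (r k))).natDegree = l := by
    rw [Polynomial.natDegree_prod _ _ (fun k _ => Polynomial.X_sub_C_ne_zero (r k))]
    simp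
  have hpn : p.natDegree = l := by
    rw [hp, Polynomial.natDegree_mul (Polynomial.C_ne_zero.mpr hc) hm.ne_zero,
      Polynomial.natDegree_C, hprodnd, zero_add]
  have hplc : p.coeff l = c := by
    have h1 : p.leadingCoeff = c := by
      rw [hp, Polynomial.leadingCoeff_mul, Polynomial.leadingCoeff_C, hm.leadingCoeff, mul_one]
    rw [← hpn, ← Polynomial.leadingCoeff, h1]
  have hroot : ∀ k, p.eval (r k) = 0 := fun k => by
    rw [hp, Polynomial.eval_mul, Polynomial.eval_prod,
      Finset.prod_eq_zero (Finset.mem_univ k) (by simp), mul_zero]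
  set S := sylvesterMatrix l n p q with hS
  set e := finSumFinEquiv (m := n) (n := l) with he
  set A : Matrix (Fin l) (Fin l) K := Matrix.of fun t k => r k ^ (l - 1 - (t : ℕ)) with hA
  set B : Matrix (Fin n) (Fin l) K :=
    Matrix.of fun i k => r k ^ (n + l - 1 - (i : ℕ)) with hB
  set T : Matrix (Fin n) (Fin n) K :=
    Matrix.of fun i j => S (e (Sum.inl i)) (e (Sum.inl j)) with hT
  set Cm : Matrix (Fin l) (Fin n) K :=
    Matrix.of fun t j => S (e (Sum.inr t)) (e (Sum.inl j)) with hCm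
  set Dm : Matrix (Fin l) (Fin l) K :=
    Matrix.of fun t k => r k ^ (l - 1 - (t : ℕ)) * q.eval (r k) with hDm
  have hel : ∀ i : Fin n, (e (Sum.inl i) : ℕ) = (i : ℕ) := by
    intro i; rw [he, finSumFinEquiv_apply_left]; simp
  have her : ∀ t : Fin l, (e (Sum.inr t) : ℕ) = n + (t : ℕ) := by
    intro t; rw [he, finSumFinEquiv_apply_right]; simp
  -- the key product identity
  have hSW : S.submatrix e e * Matrix.fromBlocks 1 B 0 A = Matrix.fromBlocks T 0 Cm Dm := by
    ext i j
    rw [Matrix.mul_apply]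
    cases j with
    | inl j' =>
      have : ∀ x : Fin n ⊕ Fin l,
          S.submatrix e e i x * (Matrix.fromBlocks (1 : Matrix (Fin n) (Fin n) K) B 0 A) x (Sum.inl j')
            = if x = Sum.inl j' then S (e i) (e (Sum.inl j')) else 0 := by
        rintro (x | x)
        · simp only [Matrix.fromBlocks_apply₁₁, Matrix.one_apply, Matrix.submatrix_apply]
          by_cases hx : x = j' <;> simp [hx]
        · simp
      rw [Finset.sum_congr rfl fun x _ => this x, Finset.sum_ite_eq' _ (Sum.inl j')]
      simp only [Finset.mem_univ, if_true]
      cases i with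
      | inl i' => simp [Matrix.fromBlocks_apply₁₁, hT]
      | inr t => simp [Matrix.fromBlocks_apply₂₁, hCm]
    | inr k' =>
      have step : ∀ x : Fin n ⊕ Fin l,
          S.submatrix e e i x * (Matrix.fromBlocks (1 : Matrix (Fin n) (Fin n) K) B 0 A) x (Sum.inr k')
            = S (e i) (e x) * r k' ^ (n + l - 1 - ((e x : Fin (n + l)) : ℕ)) := by
        rintro (x | x)
        · simp only [Matrix.fromBlocks_apply₁₂, Matrix.submatrix_apply, hB, Matrix.of_apply]
          rw [hel x]
        · simp only [Matrix.fromBlocks_apply₂₂, Matrix.submatrix_apply, hA, Matrix.of_apply]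
          rw [her x]
          congr 2
          omega
      rw [Finset.sum_congr rfl fun x _ => step x]
      rw [Equiv.sum_comp e (fun k => S (e i) k * r k' ^ (n + l - 1 - (k : ℕ)))]
      have := syl_mul_pow l n p q (le_of_eq hpn) hq (r k') (e i)
      rw [← hS] at this
      rw [this]
      cases i with
      | inl i' =>
        rw [if_pos (by rw [hel i']; exact i'.isLt)]
        rw [hroot k']
        simp [Matrix.fromBlocks_apply₁₂]
      | inr t =>
        rw [if_neg (by rw [her t]; omega)]
        simp only [Matrix.fromBlocks_apply₂₂, hDm, Matrix.of_apply]
        rw [her t]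
        congr 2
        omega
  -- determinants
  have hdetS : (S.submatrix e e).det = S.det := Matrix.det_submatrix_equiv_self e S
  have hdetW : (Matrix.fromBlocks (1 : Matrix (Fin n) (Fin n) K) B 0 A).det = A.det := by
    rw [Matrix.det_fromBlocks_zero₂₁, Matrix.det_one, one_mul]
  have hdetM : (Matrix.fromBlocks T 0 Cm Dm).det = T.det * Dm.det :=
    Matrix.det_fromBlocks_zero₁₂ _ _ _
  have hdetT : T.det = c ^ n := by
    have htri : T.BlockTriangular id := by
      intro i j hij
      simp only [id_eq] at hij
      simp only [hT, Matrix.of_apply, hS, sylvesterMatrix, Matrix.of_apply]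
      rw [if_pos (by rw [hel i]; exact i.isLt), if_neg]
      rw [hel i, hel j]
      omega
    rw [Matrix.det_of_upperTriangular htri]
    have hdiag : ∀ i : Fin n, T i i = c := by
      intro i
      simp only [hT, Matrix.of_apply, hS, sylvesterMatrix, Matrix.of_apply]
      rw [if_pos (by rw [hel i]; exact i.isLt), if_pos (by omega)]
      rw [hel i]
      have : l + (i : ℕ) - (i : ℕ) = l := by omega
      rw [this, hplc]
    rw [Finset.prod_congr rfl fun i _ => hdiag i]
    simp
  have hdetDm : Dm.det = A.det * ∏ k, q.eval (r k) := by
    have : Dm = A * Matrix.diagonal fun k => q.eval (r k) := by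
      ext t k
      rw [Matrix.mul_diagonal]
      simp [hDm, hA]
    rw [this, Matrix.det_mul, Matrix.det_diagonal]
  have hAne : A.det ≠ 0 := by
    have hsub : A.submatrix (Fin.revPerm : Equiv.Perm (Fin l)) id = (Matrix.vandermonde r).transpose := by
      ext t k
      simp only [Matrix.submatrix_apply, Matrix.transpose_apply, Matrix.vandermonde, hA,
        Matrix.of_apply, id_eq]
      congr 1
      have ht := t.isLt
      simp only [Fin.revPerm_apply, Fin.val_rev]
      omega
    have hperm := Matrix.det_permute (Fin.revPerm : Equiv.Perm (Fin l)) A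
    rw [hsub] at hperm
    have hvne : (Matrix.vandermonde r).transpose.det ≠ 0 := by
      rw [Matrix.det_transpose]
      exact Matrix.det_vandermonde_ne_zero_iff.mpr hr
    intro h
    rw [h, mul_zero] at hperm
    exact hvne hperm
  have final : S.det * A.det = (c ^ n * ∏ k, q.eval (r k)) * A.det := by
    have h1 := congrArg Matrix.det hSW
    rw [Matrix.det_mul, hdetS, hdetW, hdetM, hdetT, hdetDm] at h1
    rw [h1]; ring
  have hfin := mul_right_cancel₀ hAne final
  unfold _root_.resultant
  rw [← hS]
  exact hfin

lemma prod_eval_conj_nonneg (g : Polynomial ℝ) :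
    ∀ N : ℕ, ∀ m : Multiset ℂ, m.card = N →
      (∀ z, m.count ((starRingEnd ℂ) z) = m.count z) →
      (∀ z ∈ m, (starRingEnd ℂ) z = z → (g.map (algebraMap ℝ ℂ)).eval z = 0) →
      ∃ w : ℝ, 0 ≤ w ∧ (m.map fun z => (g.map (algebraMap ℝ ℂ)).eval z).prod = (w : ℂ) := by
  intro N
  induction N using Nat.strong_induction_on with
  | _ N ih =>
    intro m hcard hinv h0
    rcases Multiset.empty_or_exists_mem m with rfl | ⟨z, hz⟩
    · exact ⟨1, zero_le_one, by simp⟩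
    by_cases hzr : (starRingEnd ℂ) z = z
    · refine ⟨0, le_refl 0, ?_⟩
      rw [Multiset.prod_eq_zero (Multiset.mem_map.mpr ⟨z, hz, h0 z hz hzr⟩)]
      simp
    · have hcz : (starRingEnd ℂ) z ∈ m.erase z := by
        rw [← Multiset.count_pos, Multiset.count_erase_of_ne hzr, hinv z,
          Multiset.count_pos]
        exact hz
      set m' := (m.erase z).erase ((starRingEnd ℂ) z) with hm'
      have hE : m = z ::ₘ (starRingEnd ℂ) z ::ₘ m' := by
        rw [hm', Multiset.cons_erase hcz, Multiset.cons_erase hz]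
      have hcnt : ∀ w : ℂ, m.count w
          = (if w = z then 1 else 0) + ((if w = (starRingEnd ℂ) z then 1 else 0)
            + m'.count w) := by
        intro w
        rw [hE, Multiset.count_cons, Multiset.count_cons]
        ring
      have hiff1 : ∀ w : ℂ, ((starRingEnd ℂ) w = z) ↔ (w = (starRingEnd ℂ) z) := by
        intro w
        constructor
        · intro h; rw [← h]; simp
        · intro h; rw [h]; simp
      have hiff2 : ∀ w : ℂ, ((starRingEnd ℂ) w = (starRingEnd ℂ) z) ↔ (w = z) := by
        intro w
        constructor
        · intro h; have := congrArg (starRingEnd ℂ) h; simpa using this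
        · intro h; rw [h]
      have hinv' : ∀ w, m'.count ((starRingEnd ℂ) w) = m'.count w := by
        intro w
        have h1 := hinv w
        rw [hcnt w, hcnt ((starRingEnd ℂ) w), if_congr (hiff1 w) rfl rfl,
          if_congr (hiff2 w) rfl rfl] at h1
        have h2 := hinv w
        by_cases hw1 : w = z <;> by_cases hw2 : w = (starRingEnd ℂ) z <;>
          simp [hw1, hw2] at h1 ⊢ <;> omega
      have hcard' : m'.card + 2 = N := by
        rw [← hcard, hE]
        simp only [Multiset.card_cons]
      have h0' : ∀ w ∈ m', (starRingEnd ℂ) w = w →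
          (g.map (algebraMap ℝ ℂ)).eval w = 0 := fun w hw hwr =>
        h0 w (by rw [hE]; exact Multiset.mem_cons_of_mem (Multiset.mem_cons_of_mem hw)) hwr
      obtain ⟨w', hw'0, hw'⟩ := ih m'.card (by omega) m' rfl hinv' h0'
      refine ⟨Complex.normSq ((g.map (algebraMap ℝ ℂ)).eval z) * w', mul_nonneg (Complex.normSq_nonneg _) hw'0, ?_⟩
      rw [hE]
      simp only [Multiset.map_cons, Multiset.prod_cons, hw']
      have hconj : (g.map (algebraMap ℝ ℂ)).eval ((starRingEnd ℂ) z)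
          = (starRingEnd ℂ) ((g.map (algebraMap ℝ ℂ)).eval z) := by
        have h := Polynomial.aeval_conj (K := ℂ) g z
        simpa [Polynomial.aeval_def, Polynomial.eval_map] using h
      rw [hconj]
      have harr : ∀ a b : ℂ, a * ((starRingEnd ℂ) a * b) = (a * (starRingEnd ℂ) a) * b :=
        fun a b => by ring
      rw [harr, Complex.mul_conj]
      push_cast
      ring

lemma even_pos_of_nonneg (p : Polynomial ℝ) (l : ℕ) (hl : 1 ≤ l)
    (hdeg : p.natDegree = l) (hc : p.coeff l ≠ 0) (hpos : ∀ t : ℝ, 0 ≤ p.eval t) :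
    Even l ∧ 0 < p.leadingCoeff := by
  have hlc : p.leadingCoeff = p.coeff l := by rw [Polynomial.leadingCoeff, hdeg]
  have hd0 : 0 < p.degree := by
    rw [← Polynomial.natDegree_pos_iff_degree_pos, hdeg]; omega
  have hnotbot : ∀ q : Polynomial ℝ, (∀ t : ℝ, 0 ≤ q.eval t) →
      ¬ Filter.Tendsto (fun x => q.eval x) Filter.atTop Filter.atBot := by
    intro q hq h
    have := (h.eventually_lt_atBot (-1)).exists
    obtain ⟨x, hx⟩ := this
    linarith [hq x]
  have hlcpos : 0 < p.leadingCoeff := by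
    rcases lt_or_gt_of_ne (hlc ▸ hc) with h | h
    · exact absurd (Polynomial.tendsto_atBot_of_leadingCoeff_nonpos p hd0 h.le)
        (hnotbot p hpos)
    · exact h
  refine ⟨?_, hlcpos⟩
  by_contra hodd
  rw [Nat.not_even_iff_odd] at hodd
  set q := p.comp (-Polynomial.X) with hqdef
  have hqeval : ∀ t : ℝ, q.eval t = p.eval (-t) := by
    intro t; simp [hqdef]
  have hndX : (-Polynomial.X : Polynomial ℝ).natDegree = 1 := by simp
  have hqnd : q.natDegree = l := by
    rw [hqdef, Polynomial.natDegree_comp, hndX, mul_one, hdeg]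
  have hqlc : q.leadingCoeff = -p.leadingCoeff := by
    rw [hqdef, Polynomial.leadingCoeff_comp (by rw [hndX]; omega)]
    have : (-Polynomial.X : Polynomial ℝ).leadingCoeff = -1 := by simp
    rw [this, hdeg, hodd.neg_one_pow, mul_neg_one]
  have hqd0 : 0 < q.degree := by
    rw [← Polynomial.natDegree_pos_iff_degree_pos, hqnd]; omega
  exact hnotbot q (fun t => hqeval t ▸ hpos (-t))
    (Polynomial.tendsto_atBot_of_leadingCoeff_nonpos q hqd0 (by rw [hqlc]; linarith))

lemma res_nonneg (p : Polynomial ℝ) (l : ℕ) (hl : 1 ≤ l)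
    (hdeg : p.natDegree = l) (hpos : ∀ t : ℝ, 0 ≤ p.eval t) :
    0 ≤ resultant l (l - 1) p (Polynomial.derivative p) := by
  have hp0 : p ≠ 0 := fun h => by rw [h, Polynomial.natDegree_zero] at hdeg; omega
  have hc : p.coeff l ≠ 0 := by
    rw [← hdeg]; exact Polynomial.leadingCoeff_ne_zero.mpr hp0
  obtain ⟨hev, hlcpos⟩ := even_pos_of_nonneg p l hl hdeg hc hpos
  set φ := algebraMap ℝ ℂ with hφ
  set P := p.map φ with hP
  have hPnd : P.natDegree = l := by
    rw [hP, Polynomial.natDegree_map_eq_of_injective φ.injective, hdeg]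
  have hP0 : P ≠ 0 := Polynomial.map_ne_zero hp0
  have hresmap : (algebraMap ℝ ℂ) (resultant l (l - 1) p (Polynomial.derivative p))
      = resultant l (l - 1) P (Polynomial.derivative P) := by
    rw [hP, Polynomial.derivative_map, resultant_map]
  have hPderdeg : (Polynomial.derivative P).natDegree ≤ l - 1 :=
    le_trans (Polynomial.natDegree_derivative_le P) (by rw [hPnd])
  by_cases hcom : ∃ z : ℂ, P.eval z = 0 ∧ (Polynomial.derivative P).eval z = 0
  · obtain ⟨z, h1, h2⟩ := hcom
    have hz := resultant_eq_zero_of_common_root l (l - 1) (by omega) P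
      (Polynomial.derivative P) (le_of_eq hPnd) hPderdeg z h1 h2
    have h0 : (algebraMap ℝ ℂ) (resultant l (l - 1) p (Polynomial.derivative p)) = 0 := by
      rw [hresmap, hz]
    have hres0 : resultant l (l - 1) p (Polynomial.derivative p) = 0 := by
      apply (algebraMap ℝ ℂ).injective
      rw [h0, map_zero]
    rw [hres0]
  · push_neg at hcom
    have hnodup : P.roots.Nodup := by
      rw [Multiset.nodup_iff_count_le_one]
      intro z
      by_contra hcnt
      push_neg at hcnt
      have h2 : (Polynomial.X - Polynomial.C z) ^ 2 ∣ P := by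
        refine dvd_trans (pow_dvd_pow _ ?_) (Polynomial.pow_rootMultiplicity_dvd P z)
        rw [← Polynomial.count_roots]; omega
      obtain ⟨h, hh⟩ := h2
      have hz1 : P.eval z = 0 := by rw [hh]; simp
      have hz2 : (Polynomial.derivative P).eval z = 0 := by
        rw [hh, Polynomial.derivative_mul, Polynomial.derivative_pow]
        simp
      exact hcom z hz1 hz2
    have hsp : P.Splits := IsAlgClosed.splits P
    have hcard : Multiset.card P.roots = l := by
      rw [Polynomial.splits_iff_card_roots.mp hsp, hPnd]
    set L := P.roots.toList with hL
    have hLlen : L.length = l := by rw [hL, Multiset.length_toList, hcard]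
    have hLnd : L.Nodup := by
      rw [hL, ← Multiset.coe_nodup, Multiset.coe_toList]; exact hnodup
    set r : Fin l → ℂ := fun k => L.get (finCongr hLlen.symm k) with hr
    have hrinj : Function.Injective r :=
      Function.Injective.comp (List.nodup_iff_injective_get.mp hLnd) (finCongr hLlen.symm).injective
    have hroots_coe : P.roots = (↑L : Multiset ℂ) := (Multiset.coe_toList _).symm
    have hprodgen : ∀ {M : Type} [CommMonoid M] (f : ℂ → M),
        ∏ k : Fin l, f (r k) = (P.roots.map f).prod := by
      intro M _ f
      have h1 : ∏ k : Fin l, f (r k) = ∏ i : Fin L.length, f (L.get i) :=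
        Equiv.prod_comp (finCongr hLlen.symm) (fun i => f (L.get i))
      have h2 : List.ofFn (fun i => f (L.get i)) = L.map f := by
        rw [show (fun i => f (L.get i)) = f ∘ L.get from rfl, ← List.map_ofFn, List.ofFn_get]
      rw [h1, ← List.prod_ofFn, h2, hroots_coe, Multiset.map_coe, Multiset.prod_coe]
    -- factorization of P
    have hPlc : P.leadingCoeff = φ p.leadingCoeff := by
      rw [hP, Polynomial.leadingCoeff_map_of_injective φ.injective]
    have hPlc0 : P.leadingCoeff ≠ 0 := Polynomial.leadingCoeff_ne_zero.mpr hP0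
    have hPfac : P = Polynomial.C P.leadingCoeff * ∏ k, (Polynomial.X - Polynomial.C (r k)) := by
      conv_lhs => rw [hsp.eq_prod_roots]
      congr 1
      rw [← hprodgen (fun a => Polynomial.X - Polynomial.C a)]
    have hres := resultant_eq_prod l (l - 1) P.leadingCoeff hPlc0 r hrinj P
      (Polynomial.derivative P) hPfac hPderdeg
    have hderP : Polynomial.derivative P = (Polynomial.derivative p).map φ := by
      rw [hP, Polynomial.derivative_map]
    have hφx : ∀ x : ℝ, φ x = (x : ℂ) := fun x => rfl
    have hconjinv : ∀ z, P.roots.count ((starRingEnd ℂ) z) = P.roots.count z := by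
      have hself : P.map (starRingEnd ℂ) = P := by
        rw [hP, Polynomial.map_map]
        congr 1
        exact RingHom.ext fun x => by
          simp only [RingHom.comp_apply, hφx, Complex.conj_ofReal]
      intro z
      have hmap : P.roots.map (starRingEnd ℂ) = P.roots := by
        rw [← hsp.roots_map (starRingEnd ℂ), hself]
      calc P.roots.count ((starRingEnd ℂ) z)
          = (P.roots.map (starRingEnd ℂ)).count ((starRingEnd ℂ) z) := by rw [hmap]
        _ = P.roots.count z := Multiset.count_map_eq_count' _ _ (starRingEnd ℂ).injective z
    have hrealroot : ∀ z ∈ P.roots, (starRingEnd ℂ) z = z →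
        ((Polynomial.derivative p).map (algebraMap ℝ ℂ)).eval z = 0 := by
      intro z hzm hzc
      obtain ⟨x, hx⟩ : ∃ x : ℝ, z = (x : ℂ) := by
        rw [Complex.conj_eq_iff_re] at hzc
        exact ⟨z.re, hzc.symm⟩
      have hzroot : P.eval z = 0 := Polynomial.isRoot_of_mem_roots hzm
      have hPev : P.eval ((x : ℂ)) = φ (p.eval x) := by
        rw [hP, ← hφx x, Polynomial.eval_map, Polynomial.eval₂_at_apply]
      have hpx : p.eval x = 0 := by
        apply φ.injective
        rw [← hPev, ← hx, hzroot, map_zero]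
      have hmin : IsLocalMin (fun t => p.eval t) x :=
        Filter.Eventually.of_forall (fun t => by simpa [hpx] using hpos t)
      have hderiv := hmin.deriv_eq_zero
      rw [Polynomial.deriv] at hderiv
      rw [hx, ← hφx x, Polynomial.eval_map, Polynomial.eval₂_at_apply, hderiv, map_zero]
    obtain ⟨w, hw0, hw⟩ := prod_eval_conj_nonneg (Polynomial.derivative p)
      (Multiset.card P.roots) P.roots rfl hconjinv hrealroot
    have hprodd : ∏ k, (Polynomial.derivative P).eval (r k) = (w : ℂ) := by
      rw [hderP]
      rw [hprodgen (fun z => ((Polynomial.derivative p).map φ).eval z)]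
      exact hw
    have hfinal : (algebraMap ℝ ℂ) (resultant l (l - 1) p (Polynomial.derivative p))
        = (algebraMap ℝ ℂ) (p.leadingCoeff ^ (l - 1) * w) := by
      rw [hresmap, hres, hprodd, hPlc, map_mul, map_pow]
      rw [hφx w, hφx p.leadingCoeff]
    have hcast := (algebraMap ℝ ℂ).injective hfinal
    rw [hcast]
    exact mul_nonneg (pow_nonneg hlcpos.le _) hw0

lemma mv_eq_zero_of_ball (n : ℕ) :
    ∀ (g : MvPolynomial (Fin n) ℝ) (a : Fin n → ℝ) (ε : ℝ), 0 < ε →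
      (∀ x : Fin n → ℝ, (∀ i, |x i - a i| < ε) → MvPolynomial.eval x g = 0) → g = 0 := by
  induction n with
  | zero =>
    intro g a ε hε hz
    obtain ⟨c, rfl⟩ := MvPolynomial.C_surjective (Fin 0) g
    have := hz a (fun i => i.elim0)
    rw [MvPolynomial.eval_C] at this
    rw [this]
    simp
  | succ n ih =>
    intro g a ε hε hz
    set F := MvPolynomial.finSuccEquiv ℝ n g with hF
    have hcoeff : ∀ k : ℕ, F.coeff k = 0 := by
      intro k
      apply ih (F.coeff k) (a ∘ Fin.succ) ε hε
      intro s hs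
      have hone : F.map (MvPolynomial.eval s) = 0 := by
        apply Polynomial.eq_zero_of_infinite_isRoot
        have hsub : Set.Ioo (a 0 - ε) (a 0 + ε) ⊆
            {x | (F.map (MvPolynomial.eval s)).IsRoot x} := by
          intro y hy
          simp only [Set.mem_setOf_eq, Polynomial.IsRoot]
          rw [← MvPolynomial.eval_eq_eval_mv_eval']
          apply hz
          intro i
          refine Fin.cases ?_ ?_ i
          · simp only [Fin.cons_zero]
            rw [Set.mem_Ioo] at hy
            rw [abs_lt]
            constructor <;> linarith [hy.1, hy.2]
          · intro j
            simp only [Fin.cons_succ]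
            exact hs j
        exact (Set.Ioo_infinite (by linarith)).mono hsub
      have := congrArg (fun P => Polynomial.coeff P k) hone
      simpa using this
    have hF0 : F = 0 := Polynomial.ext fun k => by rw [hcoeff k]; simp
    have := (MvPolynomial.finSuccEquiv ℝ n).injective (a₂ := 0) (by rw [← hF, hF0]; simp)
    exact this

lemma mv_exists_ne_zero_on_open (n : ℕ) (g : MvPolynomial (Fin n) ℝ) (hg : g ≠ 0)
    (U : Set (Fin n → ℝ)) (hU : IsOpen U) (hne : U.Nonempty) :
    ∃ x ∈ U, MvPolynomial.eval x g ≠ 0 := by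
  by_contra h
  push_neg at h
  obtain ⟨a, ha⟩ := hne
  obtain ⟨ε, hε, hball⟩ := Metric.isOpen_iff.mp hU a ha
  apply hg
  apply mv_eq_zero_of_ball n g a ε hε
  intro x hx
  apply h
  apply hball
  rw [Metric.mem_ball, dist_pi_lt_iff hε]
  intro i
  rw [Real.dist_eq]
  exact hx i

lemma mv_eval_continuous (n : ℕ) (g : MvPolynomial (Fin n) ℝ) :
    Continuous (fun x : Fin n → ℝ => MvPolynomial.eval x g) := by
  induction g using MvPolynomial.induction_on with
  | C c => simpa using continuous_const
  | add p q hp hq => simp only [map_add]; exact hp.add hq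
  | mul_X p i hp => simp only [map_mul, MvPolynomial.eval_X]; exact hp.mul (continuous_apply i)

/-- Let `f ∈ ℝ[x₁,…,xₙ][x_{n+1}]` have degree `l ≥ 1` in the last variable,
with leading coefficient (in `x_{n+1}`) not identically zero, and let `D` be the
discriminant of `f` with respect to `x_{n+1}`, i.e. the polynomial in `x₁,…,xₙ` with
`lc(f) * D = (-1)^(l(l-1)/2) * Res(f, ∂f/∂x_{n+1})`.  If `U ⊆ ℝⁿ` is a nonempty open set
and `f(a,t) ≥ 0` for all `a ∈ U`, `t ∈ ℝ`, then `l` is even and for every `a ∈ U`,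
`lc(f)(a) ≥ 0` and `(-1)^(l/2) · D(a) ≥ 0`. -/
theorem stmt_5 (n l : ℕ) (hl : 1 ≤ l)
    (f : Polynomial (MvPolynomial (Fin n) ℝ))
    (hdeg : f.natDegree = l) (hlc : f.leadingCoeff ≠ 0)
    (D : MvPolynomial (Fin n) ℝ)
    (hD : f.leadingCoeff * D =
      (-1 : MvPolynomial (Fin n) ℝ) ^ (l * (l - 1) / 2) *
        resultant l (l - 1) f (Polynomial.derivative f))
    (U : Set (Fin n → ℝ)) (hUopen : IsOpen U) (hUne : U.Nonempty)
    (hpos : ∀ a ∈ U, ∀ t : ℝ, 0 ≤ Polynomial.eval t (f.map (MvPolynomial.eval a)))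
    : Even l ∧ ∀ a ∈ U,
        0 ≤ MvPolynomial.eval a f.leadingCoeff ∧
        0 ≤ (-1 : ℝ) ^ (l / 2) * MvPolynomial.eval a D := by
  set lc := f.leadingCoeff with hlcdef
  have hflcoeff : f.coeff l = lc := by rw [hlcdef, Polynomial.leadingCoeff, hdeg]
  have hkey : ∀ x ∈ U, MvPolynomial.eval x lc ≠ 0 →
      Even l ∧ 0 < MvPolynomial.eval x lc ∧
        0 ≤ (-1 : ℝ) ^ (l / 2) * MvPolynomial.eval x D := by
    intro x hxU hx0
    set px := f.map (MvPolynomial.eval x) with hpx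
    have hmapcoeff : px.coeff l = MvPolynomial.eval x lc := by
      rw [hpx, Polynomial.coeff_map, hflcoeff]
    have hpxdeg : px.natDegree = l :=
      le_antisymm (le_trans Polynomial.natDegree_map_le (le_of_eq hdeg))
        (Polynomial.le_natDegree_of_ne_zero (by rw [hmapcoeff]; exact hx0))
    have hpxc : px.coeff l ≠ 0 := by rw [hmapcoeff]; exact hx0
    obtain ⟨hev, hlcp⟩ := even_pos_of_nonneg px l hl hpxdeg hpxc (hpos x hxU)
    have hlcpx : px.leadingCoeff = MvPolynomial.eval x lc := by
      rw [Polynomial.leadingCoeff, hpxdeg, hmapcoeff]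
    have hres := res_nonneg px l hl hpxdeg (hpos x hxU)
    have hresx : resultant l (l - 1) px (Polynomial.derivative px)
        = MvPolynomial.eval x (resultant l (l - 1) f (Polynomial.derivative f)) := by
      rw [hpx, Polynomial.derivative_map, resultant_map]
    -- evaluate hD at x
    have hDx := congrArg (MvPolynomial.eval x) hD
    rw [map_mul, map_mul, map_pow, map_neg, map_one, ← hresx] at hDx
    -- sign juggling
    obtain ⟨m, hm⟩ := hev
    have hl2 : l / 2 = m := by omega
    have he : l * (l - 1) / 2 = m * (l - 1) := by
      have h2 : l * (l - 1) = 2 * (m * (l - 1)) := by rw [hm]; ring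
      rw [h2, Nat.mul_div_cancel_left _ (by norm_num)]
    have hsign : ((-1 : ℝ) ^ (l / 2)) * ((-1 : ℝ) ^ (l * (l - 1) / 2)) = 1 := by
      rw [← pow_add]
      apply Even.neg_one_pow
      rw [hl2, he]
      have h3 : m + m * (l - 1) = m * l := by
        have h4 : l - 1 + 1 = l := Nat.sub_add_cancel hl
        calc m + m * (l - 1) = m * ((l - 1) + 1) := by ring
          _ = m * l := by rw [h4]
      rw [h3, hm]
      exact ⟨m * m, by ring⟩
    refine ⟨⟨m, hm⟩, by rw [← hlcpx]; exact hlcp, ?_⟩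
    have h5 : ((-1 : ℝ) ^ (l / 2) * MvPolynomial.eval x D) * MvPolynomial.eval x lc
        = resultant l (l - 1) px (Polynomial.derivative px) := by
      calc ((-1 : ℝ) ^ (l / 2) * MvPolynomial.eval x D) * MvPolynomial.eval x lc
          = (-1 : ℝ) ^ (l / 2) * (MvPolynomial.eval x lc * MvPolynomial.eval x D) := by ring
        _ = (-1 : ℝ) ^ (l / 2) * ((-1 : ℝ) ^ (l * (l - 1) / 2)
              * resultant l (l - 1) px (Polynomial.derivative px)) := by rw [hDx]
        _ = (((-1 : ℝ) ^ (l / 2)) * ((-1 : ℝ) ^ (l * (l - 1) / 2)))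
              * resultant l (l - 1) px (Polynomial.derivative px) := by ring
        _ = _ := by rw [hsign, one_mul]
    have hlcgt : 0 < MvPolynomial.eval x lc := by rw [← hlcpx]; exact hlcp
    have h6 : 0 ≤ ((-1 : ℝ) ^ (l / 2) * MvPolynomial.eval x D) * MvPolynomial.eval x lc := by
      rw [h5]; exact hres
    exact (mul_nonneg_iff_of_pos_right hlcgt).mp h6
  obtain ⟨x₀, hx₀U, hx₀⟩ := mv_exists_ne_zero_on_open n lc hlc U hUopen hUne
  refine ⟨(hkey x₀ hx₀U hx₀).1, ?_⟩
  intro a haU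
  have hacl : a ∈ closure {x | x ∈ U ∧ MvPolynomial.eval x lc ≠ 0} := by
    rw [Metric.mem_closure_iff]
    intro δ hδ
    have hUO : IsOpen (Metric.ball a δ ∩ U) := Metric.isOpen_ball.inter hUopen
    have hne' : (Metric.ball a δ ∩ U).Nonempty := ⟨a, Metric.mem_ball_self hδ, haU⟩
    obtain ⟨x, hx, hxne⟩ := mv_exists_ne_zero_on_open n lc hlc _ hUO hne'
    refine ⟨x, ⟨hx.2, hxne⟩, ?_⟩
    rw [dist_comm]
    exact hx.1
  constructor
  · have hcl : IsClosed {x : Fin n → ℝ | 0 ≤ MvPolynomial.eval x lc} :=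
      isClosed_le continuous_const (mv_eval_continuous n lc)
    refine hcl.closure_subset_iff.mpr (fun x hx => ?_) hacl
    exact ((hkey x hx.1 hx.2).2.1).le
  · have hcl : IsClosed {x : Fin n → ℝ | 0 ≤ (-1 : ℝ) ^ (l / 2) * MvPolynomial.eval x D} :=
      isClosed_le continuous_const (continuous_const.mul (mv_eval_continuous n D))
    refine hcl.closure_subset_iff.mpr (fun x hx => ?_) hacl
    exact (hkey x hx.1 hx.2).2.2
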